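/- Let m ≥ 1 and n = 2m+1. Define γ_i := (1/2)(A_{m+1}(i−1) − A_{m+1}(i) + A_m(i−1) − A_m(i)) for i = 1,…,n, let T be the n×n symmetric Toeplitz matrix with entries T[i,j] = γ_{n−|i−j|}, and let u ∈ ℝ^n be the vector with u_j = ξ_{min(j, n+1−j) − 1}, i.e. u = (ξ_0, ξ_1, …, ξ_{m−1}, ξ_m, ξ_{m−1}, …, ξ_1, ξ_0). Then each γ_i ≥ 0, T u = u, and the spectral norm (largest singular value) of T equals 1. -/

import Mathlib

set_option maxHeartbeats 1000000 in
example : True := trivial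

/-- `ξ i = C(2i, i) / 4^i`. -/
noncomputable def xi (i : ℕ) : ℝ := (Nat.choose (2 * i) i : ℝ) / 4 ^ i

/-- `A_m(j) = ∑_{i=0}^{m−j−1} ξ_i ξ_{i+j}` (which is `0` when `j ≥ m`). -/
noncomputable def Am (m j : ℕ) : ℝ := ∑ i ∈ Finset.range (m - j), xi i * xi (i + j)

/-- `toeplitz n γ` is the `n×n` symmetric Toeplitz matrix `Toeplitz(γ_n, …, γ_1)` whose
`(i,j)` entry (for `1 ≤ i, j ≤ n`) is `γ_{n − |i−j|}`. -/
def toeplitz (n : ℕ) (γ : ℕ → ℝ) : Matrix (Fin n) (Fin n) ℝ :=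
  Matrix.of fun i j => γ (n - (max (i : ℕ) (j : ℕ) - min (i : ℕ) (j : ℕ)))

/-- The spectral norm (largest singular value) of a real matrix, as the operator norm
of its action on Euclidean space. -/
noncomputable def sNorm {n : ℕ} (M : Matrix (Fin n) (Fin n) ℝ) : ℝ :=
  ‖Matrix.toEuclideanCLM (𝕜 := ℝ) M‖

noncomputable def gam (m i : ℕ) : ℝ :=
  (1 / 2) * (Am (m + 1) (i - 1) - Am (m + 1) i + Am m (i - 1) - Am m i)

set_option linter.constructorNameAsVariable false
set_option linter.unusedTactic false



lemma xi_zero : xi 0 = 1 := by simp [xi]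

lemma xi_pos (i : ℕ) : 0 < xi i := by
  apply div_pos
  · exact_mod_cast Nat.choose_pos (by omega)
  · positivity

lemma xi_rec (k : ℕ) : (2 * (k : ℝ) + 2) * xi (k + 1) = (2 * k + 1) * xi k := by
  have h := Nat.succ_mul_centralBinom_succ k
  have h' : ((k + 1) * Nat.centralBinom (k + 1) : ℝ) = 2 * (2 * k + 1) * Nat.centralBinom k := by
    exact_mod_cast congrArg (Nat.cast : ℕ → ℝ) h
  simp only [Nat.centralBinom] at h'
  have e1 : 2 * (k + 1) = 2 * k + 2 := by ring
  rw [show 2 * (k+1) = 2*k+2 from by ring] at h'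
  unfold xi
  rw [show 2 * (k+1) = 2*k+2 from rfl]
  have h2 : ((k:ℝ)+1) * ((2*k+2).choose (k+1) : ℝ) * 4 ^ k
      = 2*(2*(k:ℝ)+1)*(((2*k).choose k : ℕ) : ℝ) * 4 ^ k := by
    rw [h']
  field_simp
  rw [pow_succ]
  nlinarith [h2]

lemma xi_succ_le (k : ℕ) : xi (k + 1) ≤ xi k := by
  have h := xi_rec k
  nlinarith [xi_pos k, xi_pos (k+1)]

lemma xi_le {a b : ℕ} (h : a ≤ b) : xi b ≤ xi a := by
  induction b with
  | zero => simp_all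
  | succ n ih =>
    rcases Nat.lt_or_ge a (n+1) with h'|h'
    · exact (xi_succ_le n).trans (ih (by omega))
    · have : a = n+1 := by omega
      simp [this]

lemma xi_conv : ∀ n : ℕ, ∑ k ∈ Finset.range (n + 1), xi k * xi (n - k) = 1 := by
  have weight : ∀ n : ℕ, ∑ k ∈ Finset.range (n + 1), (2 * (k : ℝ)) * (xi k * xi (n - k))
      = (n : ℝ) * ∑ k ∈ Finset.range (n + 1), xi k * xi (n - k) := by
    intro n
    have refl := Finset.sum_range_reflect (fun k => (k : ℝ) * (xi k * xi (n - k))) (n + 1)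
    -- refl : ∑ j in range (n+1), f (n + 1 - 1 - j) = ∑ j, f j
    have e : ∀ j ∈ Finset.range (n + 1),
        ((n - j : ℕ) : ℝ) * (xi (n - j) * xi (n - (n - j)))
        = ((n : ℝ) - j) * (xi j * xi (n - j)) := by
      intro j hj
      simp only [Finset.mem_range] at hj
      have hj' : j ≤ n := by omega
      rw [Nat.sub_sub_self hj', Nat.cast_sub hj']
      ring
    simp only [Nat.add_sub_cancel] at refl
    rw [Finset.sum_congr rfl e] at refl
    have split : ∑ k ∈ Finset.range (n+1), (2*(k:ℝ))*(xi k * xi (n-k))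
        = (∑ k ∈ Finset.range (n+1), (k:ℝ)*(xi k * xi (n-k)))
          + ∑ k ∈ Finset.range (n+1), (k:ℝ)*(xi k * xi (n-k)) := by
      rw [← Finset.sum_add_distrib]; exact Finset.sum_congr rfl fun k _ => by ring
    rw [split]
    nth_rewrite 2 [← refl]
    rw [← Finset.sum_add_distrib, Finset.mul_sum]
    exact Finset.sum_congr rfl fun k _ => by ring
  intro n
  induction n with
  | zero => simp [xi_zero]
  | succ n ih =>
    have key : ((n : ℝ) + 1) * ∑ k ∈ Finset.range (n + 2), xi k * xi (n + 1 - k)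
        = ((n : ℝ) + 1) * 1 := by
      have w := weight (n + 1)
      push_cast at w
      rw [← w]
      have drop := Finset.sum_range_succ' (fun k => (2 * (k : ℝ)) * (xi k * xi (n + 1 - k))) (n + 1)
      rw [drop]
      simp only [Nat.cast_zero, mul_zero, zero_mul, add_zero]
      have step : ∀ k ∈ Finset.range (n + 1),
          (2 * ((k : ℝ) + 1)) * (xi (k + 1) * xi (n + 1 - (k + 1)))
          = (2 * (k : ℝ) + 1) * (xi k * xi (n - k)) := by
        intro k hk
        have : n + 1 - (k + 1) = n - k := by omega
        rw [this]
        have hr2 : (2*(k:ℝ)+2) * xi (k+1) * xi (n-k) = (2*(k:ℝ)+1) * xi k * xi (n-k) := by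
          rw [xi_rec]
        push_cast
        linarith [hr2]
      calc ∑ k ∈ Finset.range (n + 1), (2 * ((k+1 : ℕ) : ℝ)) * (xi (k + 1) * xi (n + 1 - (k + 1)))
          = ∑ k ∈ Finset.range (n + 1), (2 * (k : ℝ) + 1) * (xi k * xi (n - k)) := by
            refine Finset.sum_congr rfl fun k hk => ?_
            simpa using step k hk
        _ = ∑ k ∈ Finset.range (n + 1), ((2 * (k : ℝ)) * (xi k * xi (n - k)) + xi k * xi (n - k)) := by
            apply Finset.sum_congr rfl; intro k _; ring
        _ = ((n : ℝ) + 1) * 1 := by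
            rw [Finset.sum_add_distrib, weight n, ih]; ring
    have hne : ((n : ℝ) + 1) ≠ 0 := by positivity
    have := mul_left_cancel₀ hne key
    simpa using this



lemma sum_triangle (f : ℕ → ℕ → ℝ) : ∀ N : ℕ,
    ∑ k ∈ Finset.range (N + 1), ∑ t ∈ Finset.range (N + 1 - k), f k t
    = ∑ s ∈ Finset.range (N + 1), ∑ k ∈ Finset.range (s + 1), f k (s - k) := by
  intro N
  induction N with
  | zero => simp
  | succ N ih =>
    have inner : ∀ k ∈ Finset.range (N + 2),
        ∑ t ∈ Finset.range (N + 2 - k), f k t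
        = (∑ t ∈ Finset.range (N + 1 - k), f k t) + f k (N + 1 - k) := by
      intro k hk
      simp only [Finset.mem_range] at hk
      rw [show N + 2 - k = (N + 1 - k) + 1 by omega, Finset.sum_range_succ]
    rw [Finset.sum_congr rfl inner, Finset.sum_add_distrib]
    rw [Finset.sum_range_succ (fun k => ∑ t ∈ Finset.range (N + 1 - k), f k t) (N+1)]
    simp only [Nat.sub_self, Finset.range_zero, Finset.sum_empty, add_zero]
    rw [ih, Finset.sum_range_succ
      (fun s => ∑ k ∈ Finset.range (s + 1), f k (s - k)) (N+1)]

lemma trig (N c : ℕ) :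
    ∑ k ∈ Finset.range (N + 1), xi k * ∑ t ∈ Finset.range (N + 1 - k), xi t * xi (t + k + c)
    = ∑ s ∈ Finset.range (N + 1), xi (s + c) := by
  have h1 : ∀ k, xi k * ∑ t ∈ Finset.range (N + 1 - k), xi t * xi (t + k + c)
      = ∑ t ∈ Finset.range (N + 1 - k), xi k * (xi t * xi (t + k + c)) :=
    fun k => Finset.mul_sum _ _ _
  simp only [h1]
  rw [sum_triangle (fun k t => xi k * (xi t * xi (t + k + c)))]
  refine Finset.sum_congr rfl fun s hs => ?_
  have e : ∀ k ∈ Finset.range (s + 1),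
      xi k * (xi (s - k) * xi ((s - k) + k + c)) = xi k * xi (s - k) * xi (s + c) := by
    intro k hk
    simp only [Finset.mem_range] at hk
    rw [show s - k + k + c = s + c by omega]
    ring
  rw [Finset.sum_congr rfl e, ← Finset.sum_mul, xi_conv s, one_mul]

lemma trig2 (N R c : ℕ) (hR : R ≤ N + 1) :
    ∑ k ∈ Finset.range (N + 1), xi k * ∑ t ∈ Finset.range (R - k), xi t * xi (t + k + c)
    = ∑ s ∈ Finset.range R, xi (s + c) := by
  have sub : Finset.range R ⊆ Finset.range (N + 1) := Finset.range_subset_range.2 hR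
  rw [← Finset.sum_subset sub (fun k _ hk => ?_)]
  · rcases R with _ | P
    · simp
    · exact trig P c
  · simp only [Finset.mem_range, not_lt] at hk
    rw [show R - k = 0 by omega]
    simp

lemma Am_eq_zero {M j : ℕ} (h : M ≤ j) : Am M j = 0 := by
  unfold Am
  rw [show M - j = 0 by omega]
  simp

lemma Am_antitone (M j : ℕ) : Am M (j + 1) ≤ Am M j := by
  unfold Am
  calc ∑ i ∈ Finset.range (M - (j+1)), xi i * xi (i + (j+1))
      ≤ ∑ i ∈ Finset.range (M - (j+1)), xi i * xi (i + j) := by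
        refine Finset.sum_le_sum fun i _ => ?_
        exact mul_le_mul_of_nonneg_left (xi_le (by omega)) (xi_pos i).le
    _ ≤ ∑ i ∈ Finset.range (M - j), xi i * xi (i + j) := by
        refine Finset.sum_le_sum_of_subset_of_nonneg
          (Finset.range_subset_range.2 (by omega)) fun i _ _ => ?_
        exact mul_nonneg (xi_pos i).le (xi_pos _).le




lemma gam_nonneg (m i : ℕ) (h : 1 ≤ i) : 0 ≤ gam m i := by
  obtain ⟨j, rfl⟩ : ∃ j, i = j + 1 := ⟨i - 1, by omega⟩
  have h1 := Am_antitone (m + 1) j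
  have h2 := Am_antitone m j
  unfold gam
  simp only [Nat.add_sub_cancel]
  linarith

lemma gam_eq_zero (m s : ℕ) (h : m + 2 ≤ s) : gam m s = 0 := by
  unfold gam
  rw [Am_eq_zero (show m + 1 ≤ s - 1 by omega), Am_eq_zero (show m + 1 ≤ s by omega),
    Am_eq_zero (show m ≤ s - 1 by omega), Am_eq_zero (show m ≤ s by omega)]
  ring

lemma key_sum (m i : ℕ) (hi : i ≤ m) :
    ∑ k ∈ Finset.range (m - i + 1), xi k * gam m (i + k + 1)
    = xi i / 2 + (if i < m then xi i / 2 else 0) := by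
  set N := m - i with hN
  have expand : ∀ k ∈ Finset.range (N + 1), xi k * gam m (i + k + 1)
      = (1/2) * (xi k * Am (m+1) (i+k) - xi k * Am (m+1) (i+k+1)
        + xi k * Am m (i+k) - xi k * Am m (i+k+1)) := by
    intro k _
    unfold gam
    rw [show i + k + 1 - 1 = i + k by omega]
    ring
  rw [Finset.sum_congr rfl expand]
  have s1 : ∑ k ∈ Finset.range (N + 1), xi k * Am (m+1) (i+k)
      = ∑ s ∈ Finset.range (N + 1), xi (s + i) := by
    rw [← trig2 N (N+1) i le_rfl]
    refine Finset.sum_congr rfl fun k _ => ?_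
    unfold Am
    rw [show m + 1 - (i + k) = N + 1 - k by omega]
    congr 1
    refine Finset.sum_congr rfl fun t _ => ?_
    rw [show t + (i + k) = t + k + i by omega]
  have s2 : ∑ k ∈ Finset.range (N + 1), xi k * Am (m+1) (i+k+1)
      = ∑ s ∈ Finset.range N, xi (s + (i+1)) := by
    rw [← trig2 N N (i+1) (by omega)]
    refine Finset.sum_congr rfl fun k _ => ?_
    unfold Am
    rw [show m + 1 - (i + k + 1) = N - k by omega]
    congr 1
    refine Finset.sum_congr rfl fun t _ => ?_
    rw [show t + (i + k + 1) = t + k + (i + 1) by omega]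
  have s3 : ∑ k ∈ Finset.range (N + 1), xi k * Am m (i+k)
      = ∑ s ∈ Finset.range N, xi (s + i) := by
    rw [← trig2 N N i (by omega)]
    refine Finset.sum_congr rfl fun k _ => ?_
    unfold Am
    rw [show m - (i + k) = N - k by omega]
    congr 1
    refine Finset.sum_congr rfl fun t _ => ?_
    rw [show t + (i + k) = t + k + i by omega]
  have s4 : ∑ k ∈ Finset.range (N + 1), xi k * Am m (i+k+1)
      = ∑ s ∈ Finset.range (N - 1), xi (s + (i+1)) := by
    rw [← trig2 N (N-1) (i+1) (by omega)]
    refine Finset.sum_congr rfl fun k _ => ?_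
    unfold Am
    rw [show m - (i + k + 1) = N - 1 - k by omega]
    congr 1
    refine Finset.sum_congr rfl fun t _ => ?_
    rw [show t + (i + k + 1) = t + k + (i + 1) by omega]
  rw [← Finset.mul_sum, Finset.sum_sub_distrib, Finset.sum_add_distrib, Finset.sum_sub_distrib,
    s1, s2, s3, s4]
  have shift : ∀ P : ℕ, ∑ s ∈ Finset.range (P + 1), xi (s + i)
      = (∑ s ∈ Finset.range P, xi (s + (i + 1))) + xi i := by
    intro P
    rw [Finset.sum_range_succ' (fun s => xi (s + i)) P]
    simp only [zero_add]
    congr 1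
    refine Finset.sum_congr rfl fun s _ => ?_
    rw [show s + 1 + i = s + (i + 1) by omega]
  by_cases hc : i < m
  · obtain ⟨P, hP⟩ : ∃ P, N = P + 1 := ⟨N - 1, by omega⟩
    rw [hP, show P + 1 - 1 = P by omega, shift (P + 1), shift P]
    simp only [if_pos hc]
    ring
  · have hN0 : N = 0 := by omega
    rw [hN0]
    simp only [Finset.range_zero, Finset.sum_empty, Nat.zero_sub, if_neg hc]
    rw [shift 0]
    simp only [Finset.range_zero, Finset.sum_empty, zero_add]
    ring



lemma gam_mid (m : ℕ) : gam m (m + 1) = xi m / 2 := by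
  have h := key_sum m m le_rfl
  simp only [Nat.sub_self, lt_self_iff_false, if_false, add_zero, zero_add,
    Finset.range_one, Finset.sum_singleton, xi_zero, one_mul] at h
  simpa using h

lemma row_sum_le (m : ℕ) (hm : 1 ≤ m) (i : ℕ) (hi : i ≤ m) :
    ∑ j ∈ Finset.range (2 * m + 1),
      gam m (2 * m + 1 - (max i j - min i j)) * xi (min j (2 * m - j))
    = xi i := by
  set f : ℕ → ℝ := fun j => gam m (2 * m + 1 - (max i j - min i j)) * xi (min j (2 * m - j))
    with hf
  have hsplit : ∑ j ∈ Finset.range (2 * m + 1), f j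
      = (∑ j ∈ Finset.Ico 0 (i + m), f j) + ∑ j ∈ Finset.Ico (i + m) (2 * m + 1), f j := by
    rw [Finset.range_eq_Ico]
    exact (Finset.sum_Ico_consecutive f (by omega) (by omega)).symm
  have part2 : ∑ j ∈ Finset.Ico (i + m) (2 * m + 1), f j
      = ∑ k ∈ Finset.range (m - i + 1), xi k * gam m (i + k + 1) := by
    rw [Finset.sum_Ico_eq_sum_range]
    rw [show 2 * m + 1 - (i + m) = m - i + 1 by omega]
    rw [← Finset.sum_range_reflect (fun k => f (i + m + k)) (m - i + 1)]
    refine Finset.sum_congr rfl fun k hk => ?_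
    simp only [Finset.mem_range] at hk
    have hk' : k ≤ m - i := by omega
    rw [show i + m + (m - i + 1 - 1 - k) = 2 * m - k by omega]
    simp only [hf]
    rw [show max i (2 * m - k) - min i (2 * m - k) = 2 * m - k - i by omega,
      show 2 * m + 1 - (2 * m - k - i) = i + k + 1 by omega,
      show min (2 * m - k) (2 * m - (2 * m - k)) = k by omega]
    ring
  have part1 : ∑ j ∈ Finset.Ico 0 (i + m), f j
      = if i = m then gam m (m + 1) else 0 := by
    by_cases hc : i = m
    · rw [if_pos hc, ← Finset.range_eq_Ico]
      rw [Finset.sum_eq_single 0]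
      · simp only [hf]
        rw [show max i 0 - min i 0 = i by omega, show 2 * m + 1 - i = m + 1 by omega,
          show min 0 (2 * m - 0) = 0 by omega, xi_zero, mul_one]
      · intro j hj hj0
        simp only [Finset.mem_range] at hj
        simp only [hf]
        rw [gam_eq_zero m _ (by omega), zero_mul]
      · intro h
        exact absurd (Finset.mem_range.2 (by omega)) h
    · rw [if_neg hc]
      refine Finset.sum_eq_zero fun j hj => ?_
      simp only [Finset.mem_Ico] at hj
      simp only [hf]
      rw [gam_eq_zero m _ (by omega), zero_mul]
  rw [hsplit, part1, part2, key_sum m i hi]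
  by_cases hc : i = m
  · rw [if_pos hc, if_neg (by omega : ¬ i < m), gam_mid, hc]
    ring
  · rw [if_neg hc, if_pos (by omega)]
    ring

lemma row_sum (m : ℕ) (hm : 1 ≤ m) (i : ℕ) (hi : i ≤ 2 * m) :
    ∑ j ∈ Finset.range (2 * m + 1),
      gam m (2 * m + 1 - (max i j - min i j)) * xi (min j (2 * m - j))
    = xi (min i (2 * m - i)) := by
  rcases le_or_gt i m with h | h
  · rw [show min i (2 * m - i) = i by omega]
    exact row_sum_le m hm i h
  · have key := row_sum_le m hm (2 * m - i) (by omega)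
    rw [show min i (2 * m - i) = 2 * m - i by omega]
    rw [← key, ← Finset.sum_range_reflect (fun j =>
      gam m (2 * m + 1 - (max (2*m-i) j - min (2*m-i) j)) * xi (min j (2 * m - j))) (2*m+1)]
    refine Finset.sum_congr rfl fun j hj => ?_
    simp only [Finset.mem_range] at hj
    rw [show 2 * m + 1 - 1 - j = 2 * m - j by omega]
    rw [show max (2*m-i) (2*m-j) - min (2*m-i) (2*m-j) = max i j - min i j by omega,
      show min (2*m-j) (2*m - (2*m-j)) = min j (2*m - j) by omega]

lemma specnorm_one {n : ℕ} (hn : 0 < n) (T : Matrix (Fin n) (Fin n) ℝ) (u : Fin n → ℝ)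
    (hsym : ∀ i j, T i j = T j i) (hpos : ∀ i j, 0 ≤ T i j) (hu : ∀ j, 0 < u j)
    (heig : T.mulVec u = u) : ‖Matrix.toEuclideanCLM (𝕜 := ℝ) T‖ = 1 := by
  set A := Matrix.toEuclideanCLM (𝕜 := ℝ) T with hA
  have mulVec_apply : ∀ (y : Fin n → ℝ) (i : Fin n), T.mulVec y i = ∑ j, T i j * y j := by
    intro y i; simp [Matrix.mulVec, dotProduct]
  have rowu : ∀ i, ∑ j, T i j * u j = u i := by
    intro i; rw [← mulVec_apply, heig]
  have key : ∀ y : Fin n → ℝ, ∑ i, (T.mulVec y i) ^ 2 ≤ ∑ i, (y i) ^ 2 := by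
    intro y
    have quad : ∀ i, (T.mulVec y i) ^ 2 ≤ u i * ∑ j, T i j / u j * y j ^ 2 := by
      intro i
      have cs := Finset.sum_mul_sq_le_sq_mul_sq Finset.univ
        (fun j => Real.sqrt (T i j * u j)) (fun j => Real.sqrt (T i j / u j) * y j)
      have e1 : ∀ j : Fin n, Real.sqrt (T i j * u j) * (Real.sqrt (T i j / u j) * y j)
          = T i j * y j := by
        intro j
        rw [← mul_assoc, ← Real.sqrt_mul (mul_nonneg (hpos i j) (hu j).le),
          show T i j * u j * (T i j / u j) = T i j ^ 2 * (u j / u j) by ring,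
          div_self (hu j).ne', mul_one, Real.sqrt_sq (hpos i j)]
      have e2 : ∀ j : Fin n, Real.sqrt (T i j * u j) ^ 2 = T i j * u j :=
        fun j => Real.sq_sqrt (mul_nonneg (hpos i j) (hu j).le)
      have e3 : ∀ j : Fin n, (Real.sqrt (T i j / u j) * y j) ^ 2 = T i j / u j * y j ^ 2 := by
        intro j; rw [mul_pow, Real.sq_sqrt (div_nonneg (hpos i j) (hu j).le)]
      rw [Finset.sum_congr rfl (fun j _ => e1 j), Finset.sum_congr rfl (fun j _ => e2 j),
        Finset.sum_congr rfl (fun j _ => e3 j), rowu i] at cs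
      rw [mulVec_apply]
      exact cs
    calc ∑ i, (T.mulVec y i) ^ 2 ≤ ∑ i, u i * ∑ j, T i j / u j * y j ^ 2 :=
          Finset.sum_le_sum fun i _ => quad i
      _ = ∑ j, ∑ i, u i * (T i j / u j * y j ^ 2) := by
          rw [← Finset.sum_comm]
          exact Finset.sum_congr rfl fun i _ => Finset.mul_sum _ _ _
      _ = ∑ j, (∑ i, T j i * u i) * (y j ^ 2 / u j) := by
          refine Finset.sum_congr rfl fun j _ => ?_
          rw [Finset.sum_mul]
          refine Finset.sum_congr rfl fun i _ => ?_
          rw [hsym i j]; ring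
      _ = ∑ j, (y j) ^ 2 := by
          refine Finset.sum_congr rfl fun j _ => ?_
          rw [rowu j, mul_comm, div_mul_cancel₀ _ (hu j).ne']
  have norm_apply : ∀ x : EuclideanSpace ℝ (Fin n), ‖A x‖ ≤ ‖x‖ := by
    intro x
    have hx : ∀ i, A x i = T.mulVec (fun j => x j) i := by
      intro i
      have := Matrix.ofLp_toEuclideanCLM (𝕜 := ℝ) T x
      have h2 := congrFun this i
      exact h2
    rw [EuclideanSpace.norm_eq, EuclideanSpace.norm_eq]
    apply Real.sqrt_le_sqrt
    calc ∑ i, ‖A x i‖ ^ 2 = ∑ i, (T.mulVec (fun j => x j) i) ^ 2 := by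
          refine Finset.sum_congr rfl fun i _ => ?_
          rw [hx i, Real.norm_eq_abs, sq_abs]
      _ ≤ ∑ i, (x i) ^ 2 := key _
      _ = ∑ i, ‖x i‖ ^ 2 := by
          refine Finset.sum_congr rfl fun i _ => ?_
          rw [Real.norm_eq_abs, sq_abs]
  have upper : ‖A‖ ≤ 1 := by
    refine ContinuousLinearMap.opNorm_le_bound A zero_le_one fun x => ?_
    rw [one_mul]; exact norm_apply x
  have lower : 1 ≤ ‖A‖ := by
    set u' : EuclideanSpace ℝ (Fin n) := (WithLp.equiv 2 (Fin n → ℝ)).symm u with hu'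
    have hAu : A u' = u' := by
      rw [hu', hA]; exact congrArg (WithLp.toLp 2) heig
    have hne : u' ≠ 0 := by
      intro h
      have h0 := congrArg (fun v : EuclideanSpace ℝ (Fin n) => v ⟨0, hn⟩) h
      have : u ⟨0, hn⟩ = 0 := h0
      exact (hu ⟨0, hn⟩).ne' this
    have hnorm : 0 < ‖u'‖ := norm_pos_iff.2 hne
    have := A.le_opNorm u'
    rw [hAu] at this
    nlinarith
  linarith

/-- Let `m ≥ 1`, `n = 2m+1`, and `γ_i = (1/2)(A_{m+1}(i−1) − A_{m+1}(i) + A_m(i−1) − A_m(i))`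
for `i = 1, …, n`; let `T = Toeplitz(γ_n, …, γ_1)` and let
`u = (ξ_0, ξ_1, …, ξ_{m−1}, ξ_m, ξ_{m−1}, …, ξ_1, ξ_0)`, i.e. `u_j = ξ_{min(j, n+1−j) − 1}`
for `1 ≤ j ≤ n`.  Then each `γ_i ≥ 0`, `T u = u`, and the spectral norm of `T` equals `1`. -/
theorem odd_toeplitz (m : ℕ) (hm : 1 ≤ m) :
    let n := 2 * m + 1
    let γ : ℕ → ℝ := fun i =>
      (1 / 2) * (Am (m + 1) (i - 1) - Am (m + 1) i + Am m (i - 1) - Am m i)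
    let T := toeplitz n γ
    let u : Fin n → ℝ := fun j => xi (min (j : ℕ) (n - 1 - (j : ℕ)))
    (∀ i, 1 ≤ i → i ≤ n → 0 ≤ γ i) ∧ T.mulVec u = u ∧ sNorm T = 1 := by
  intro n γ T u
  have hγ : γ = gam m := rfl
  have hTent : ∀ i j : Fin n, T i j
      = gam m (2 * m + 1 - (max (i : ℕ) (j : ℕ) - min (i : ℕ) (j : ℕ))) := fun i j => rfl
  have hTu : T.mulVec u = u := by
    funext i
    show ∑ j : Fin n, T i j * u j = u i
    have hilt : (i : ℕ) < 2 * m + 1 := i.isLt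
    calc ∑ j : Fin n, T i j * u j
        = ∑ j ∈ Finset.range (2 * m + 1),
            gam m (2 * m + 1 - (max (i : ℕ) j - min (i : ℕ) j)) * xi (min j (2 * m - j)) := by
          exact Fin.sum_univ_eq_sum_range (fun j =>
            gam m (2 * m + 1 - (max (i : ℕ) j - min (i : ℕ) j)) * xi (min j (2 * m - j)))
            (2 * m + 1)
      _ = xi (min (i : ℕ) (2 * m - (i : ℕ))) := row_sum m hm i (by omega)
      _ = u i := rfl
  refine ⟨fun i h1 _ => gam_nonneg m i h1, hTu, ?_⟩
  show ‖Matrix.toEuclideanCLM (𝕜 := ℝ) T‖ = 1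
  refine specnorm_one (n := 2 * m + 1) (by omega) T u ?_ ?_ ?_ hTu
  · intro i j
    rw [hTent i j, hTent j i, max_comm, min_comm]
  · intro i j
    rw [hTent i j]
    have hilt : (i : ℕ) < 2 * m + 1 := i.isLt
    have hjlt : (j : ℕ) < 2 * m + 1 := j.isLt
    exact gam_nonneg m _ (by omega)
  · intro j
    exact xi_pos _
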